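/- arXiv:1905.11902 — 3 statements merged into one kernel-verified Lean document; each statement's English description precedes it below -/
import Mathlib

section
/- The VC dimension of the class H_n of binary classifiers on pairs of n elements induced by partitions (where h_C(u,v)=+1 iff u and v are in the same block of partition C) is exactly n-1. -/
open Finset

-- relation of a finite edge set
private def Rel' {n : ℕ} (S : Finset (Fin n × Fin n)) (a b : Fin n) : Prop :=
  (a, b) ∈ S ∨ (b, a) ∈ S

private lemma rel'_mono {n : ℕ} {S T : Finset (Fin n × Fin n)} (h : S ⊆ T) :
    ∀ a b, Rel' S a b → Rel' T a b := by
  intro a b hab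
  rcases hab with h1 | h1
  · exact Or.inl (h h1)
  · exact Or.inr (h h1)

private lemma forest_count {n : ℕ} (S : Finset (Fin n × Fin n))
    (hb : ∀ e ∈ S, ¬ Relation.EqvGen (Rel' (S.erase e)) e.1 e.2) :
    S.card + Nat.card (Quotient (Relation.EqvGen.setoid (Rel' S))) ≤ n := by
  classical
  induction S using Finset.induction_on with
  | empty =>
      simp only [Finset.card_empty, zero_add]
      have hsurj : Function.Surjective
          (Quotient.mk (Relation.EqvGen.setoid (Rel' (∅ : Finset (Fin n × Fin n))))) :=
        Quotient.mk_surjective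
      calc Nat.card (Quotient (Relation.EqvGen.setoid (Rel' (∅ : Finset (Fin n × Fin n)))))
          ≤ Nat.card (Fin n) := Nat.card_le_card_of_surjective _ hsurj
        _ = n := by simp
  | @insert e S he ih =>
      have hbS : ∀ e' ∈ S, ¬ Relation.EqvGen (Rel' (S.erase e')) e'.1 e'.2 := by
        intro e' he' h
        refine hb e' (Finset.mem_insert_of_mem he') ?_
        refine Relation.EqvGen.mono (rel'_mono ?_) _ _ h
        intro x hx
        rw [Finset.mem_erase] at hx ⊢
        exact ⟨hx.1, Finset.mem_insert_of_mem hx.2⟩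
      have hne : ¬ Relation.EqvGen (Rel' S) e.1 e.2 := by
        have := hb e (Finset.mem_insert_self e S)
        rwa [Finset.erase_insert he] at this
      -- surjective, non-injective map between quotients
      let φ : Quotient (Relation.EqvGen.setoid (Rel' S)) →
          Quotient (Relation.EqvGen.setoid (Rel' (insert e S))) :=
        Quotient.map id (fun a b h => Relation.EqvGen.mono (rel'_mono (Finset.subset_insert e S)) _ _ h)
      have hsurj : Function.Surjective φ := by
        intro q
        induction q using Quotient.ind with
        | _ a => exact ⟨⟦a⟧, rfl⟩
      have hninj : ¬ Function.Injective φ := by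
        intro hinj
        have h1 : φ ⟦e.1⟧ = φ ⟦e.2⟧ := by
          refine Quotient.sound ?_
          exact Relation.EqvGen.rel _ _ (Or.inl (Finset.mem_insert_self e S))
        have := hinj h1
        exact hne (Quotient.exact this)
      have hlt : Nat.card (Quotient (Relation.EqvGen.setoid (Rel' (insert e S)))) <
          Nat.card (Quotient (Relation.EqvGen.setoid (Rel' S))) := by
        letI : Fintype (Quotient (Relation.EqvGen.setoid (Rel' S))) := Fintype.ofFinite _
        letI : Fintype (Quotient (Relation.EqvGen.setoid (Rel' (insert e S)))) := Fintype.ofFinite _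
        simp only [Nat.card_eq_fintype_card]
        exact Fintype.card_lt_of_surjective_not_injective φ hsurj hninj
      have := ih hbS
      rw [Finset.card_insert_of_notMem he]
      omega

private lemma upper_bound {n : ℕ} (hn : 2 ≤ n) (S : Finset (Fin n × Fin n))
    (hsh : ∀ g : Fin n × Fin n → Bool, ∃ c : Setoid (Fin n),
      ∀ e ∈ S, (Setoid.r e.1 e.2 ↔ g e = true)) :
    S.card ≤ n - 1 := by
  have hb : ∀ e ∈ S, ¬ Relation.EqvGen (Rel' (S.erase e)) e.1 e.2 := by
    intro e he h
    obtain ⟨c, hc⟩ := hsh (fun e' => decide (e' ≠ e))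
    have key : ∀ a b, Relation.EqvGen (Rel' (S.erase e)) a b → c.r a b := by
      intro a b hab
      induction hab with
      | rel a b hr =>
          rcases hr with h1 | h1
          · rw [Finset.mem_erase] at h1
            have := (hc (a, b) h1.2).mpr (by simpa using h1.1)
            exact this
          · rw [Finset.mem_erase] at h1
            have := (hc (b, a) h1.2).mpr (by simpa using h1.1)
            exact c.iseqv.symm this
      | refl a => exact c.iseqv.refl a
      | symm a b _ ih => exact c.iseqv.symm ih
      | trans a b cc _ _ ih1 ih2 => exact c.iseqv.trans ih1 ih2
    have h1 : c.r e.1 e.2 := key _ _ h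
    have h2 := (hc e he).mp h1
    simp at h2
  have hcount := forest_count S hb
  have hpos : 1 ≤ Nat.card (Quotient (Relation.EqvGen.setoid (Rel' S))) := by
    have : Nonempty (Quotient (Relation.EqvGen.setoid (Rel' S))) :=
      ⟨⟦(⟨0, by omega⟩ : Fin n)⟧⟩
    have : 0 < Nat.card (Quotient (Relation.EqvGen.setoid (Rel' S))) := Nat.card_pos
    omega
  omega

/-- The VC dimension of the class `H_n` of classifiers on pairs of `n` elements
induced by partitions (represented as setoids), where `h_C(u,v) = +1` iff `u,v`
are in the same block, is exactly `n - 1`.  Pairs of distinct elements are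
represented as ordered pairs `(u,v)` with `u < v`; a set `S` of pairs is
shattered if every `±1` labeling `g` of `S` is realized by some partition. -/
theorem vc_dim_partition_classifiers (n : ℕ) (hn : 2 ≤ n) :
    IsGreatest {k : ℕ | ∃ S : Finset (Fin n × Fin n),
      (∀ e ∈ S, e.1 < e.2) ∧ S.card = k ∧
      ∀ g : Fin n × Fin n → Bool, ∃ c : Setoid (Fin n),
        ∀ e ∈ S, (Setoid.r e.1 e.2 ↔ g e = true)} (n - 1) := by
  constructor
  · -- membership: the path edges (i, i+1)
    classical
    have hf : ∀ i : Fin (n - 1), i.1 + 1 < n := fun i => by omega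
    have hf0 : ∀ i : Fin (n - 1), i.1 < n := fun i => by omega
    set f : Fin (n - 1) → Fin n × Fin n :=
      fun i => (⟨i.1, hf0 i⟩, ⟨i.1 + 1, hf i⟩) with hfdef
    have hinj : Function.Injective f := by
      intro a b hab
      have := congrArg (fun p => p.1.1) hab
      simp [hfdef] at this
      exact Fin.ext this
    refine ⟨Finset.image f Finset.univ, ?_, ?_, ?_⟩
    · intro e he
      simp only [Finset.mem_image] at he
      obtain ⟨i, _, rfl⟩ := he
      simp [hfdef, Fin.lt_def]
    · rw [Finset.card_image_of_injective _ hinj]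
      simp
    · intro g
      set w : ℕ → ℕ := fun m =>
        ((Finset.range m).filter
          (fun j => ¬ (j < n - 1 ∧ ∀ h : j < n - 1, g (f ⟨j, h⟩) = true))).card with hwdef
      refine ⟨⟨fun a b => w a.1 = w b.1, ⟨fun _ => rfl, Eq.symm, Eq.trans⟩⟩, ?_⟩
      intro e he
      simp only [Finset.mem_image] at he
      obtain ⟨i, _, rfl⟩ := he
      show w i.1 = w (i.1 + 1) ↔ g (f i) = true
      have hstep : w (i.1 + 1) =
          w i.1 + (if ¬ (i.1 < n - 1 ∧ ∀ h : i.1 < n - 1, g (f ⟨i.1, h⟩) = true) then 1 else 0) := by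
        simp only [hwdef, Finset.range_add_one, Finset.filter_insert]
        split <;> simp [Finset.mem_filter]
      have hi : i.1 < n - 1 := i.2
      by_cases hg : g (f i) = true
      · have : (i.1 < n - 1 ∧ ∀ h : i.1 < n - 1, g (f ⟨i.1, h⟩) = true) := by
          exact ⟨hi, fun h => by convert hg⟩
        rw [hstep]
        simp [this, hg]
      · have : ¬ (i.1 < n - 1 ∧ ∀ h : i.1 < n - 1, g (f ⟨i.1, h⟩) = true) := by
          rintro ⟨h1, h2⟩
          exact hg (by convert h2 hi)
        rw [hstep]
        simp [this]
  · intro k hk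
    obtain ⟨S, _, hcard, hsh⟩ := hk
    rw [← hcard]
    exact upper_bound hn S hsh
end

section
/- The number of edge-disjoint bad triangles in a labeled complete graph is a lower bound on the correlation clustering optimum OPT. -/
/-- A triangle, given as a triple of pairwise distinct vertices, is *bad* if
exactly one of its three pair labels is `-1` (`false`). -/
def IsBadTriangle {n : ℕ} (σ : Fin n → Fin n → Bool)
    (t : Fin n × Fin n × Fin n) : Prop :=
  t.1 ≠ t.2.1 ∧ t.1 ≠ t.2.2 ∧ t.2.1 ≠ t.2.2 ∧
    ((σ t.1 t.2.1 = false ∧ σ t.1 t.2.2 = true ∧ σ t.2.1 t.2.2 = true) ∨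
     (σ t.1 t.2.1 = true ∧ σ t.1 t.2.2 = false ∧ σ t.2.1 t.2.2 = true) ∨
     (σ t.1 t.2.1 = true ∧ σ t.1 t.2.2 = true ∧ σ t.2.1 t.2.2 = false))

/-- The three (unordered) edges of a triangle. -/
def triPairs {n : ℕ} (t : Fin n × Fin n × Fin n) : Finset (Sym2 (Fin n)) :=
  {Sym2.mk t.1 t.2.1, Sym2.mk t.1 t.2.2, Sym2.mk t.2.1 t.2.2}

/-- The cost (number of mistaken pairs) of a partition `c` w.r.t. labeling `σ`:
pairs `u < v` with `σ(u,v) = +1` and `u,v` in different blocks, or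
`σ(u,v) = -1` and `u,v` in the same block. -/
noncomputable def ccCost {n : ℕ} (σ : Fin n → Fin n → Bool)
    (c : Setoid (Fin n)) : ℕ :=
  Set.ncard {e : Fin n × Fin n | e.1 < e.2 ∧ (σ e.1 e.2 = true ↔ ¬ Setoid.r e.1 e.2)}

lemma exists_mistake {n : ℕ} (σ : Fin n → Fin n → Bool) (hσ : ∀ u v, σ u v = σ v u)
    (c : Setoid (Fin n)) (t : Fin n × Fin n × Fin n) (hb : IsBadTriangle σ t) :
    ∃ e : Fin n × Fin n, e.1 < e.2 ∧ (σ e.1 e.2 = true ↔ ¬ Setoid.r e.1 e.2) ∧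
      Sym2.mk e.1 e.2 ∈ triPairs t := by
  obtain ⟨a, b, d⟩ := t
  obtain ⟨hab, had, hbd, hcase⟩ := hb
  -- first find an unsorted mistaken edge
  have key : ∃ x y : Fin n, x ≠ y ∧ (σ x y = true ↔ ¬ Setoid.r x y) ∧
      Sym2.mk x y ∈ triPairs (a, b, d) := by
    by_contra h
    push_neg at h
    have m1 := h a b hab
    have m2 := h a d had
    have m3 := h b d hbd
    simp [triPairs] at m1 m2 m3
    have r1 : σ a b = true ↔ Setoid.r a b := by
      constructor
      · intro hs; by_contra hr; exact m1 (by rw [hs]; simp [hr])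
      · intro hr; by_contra hs
        simp [Bool.not_eq_true] at hs
        exact m1 (by rw [hs]; simp [hr])
    have r2 : σ a d = true ↔ Setoid.r a d := by
      constructor
      · intro hs; by_contra hr; exact m2 (by rw [hs]; simp [hr])
      · intro hr; by_contra hs
        simp [Bool.not_eq_true] at hs
        exact m2 (by rw [hs]; simp [hr])
    have r3 : σ b d = true ↔ Setoid.r b d := by
      constructor
      · intro hs; by_contra hr; exact m3 (by rw [hs]; simp [hr])
      · intro hr; by_contra hs
        simp [Bool.not_eq_true] at hs
        exact m3 (by rw [hs]; simp [hr])
    rcases hcase with ⟨h1, h2, h3⟩ | ⟨h1, h2, h3⟩ | ⟨h1, h2, h3⟩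
    · have rad := r2.mp h2
      have rbd := r3.mp h3
      have : Setoid.r a b := Setoid.trans rad (Setoid.symm rbd)
      simp [h1] at r1; exact r1 this
    · have rab := r1.mp h1
      have rbd := r3.mp h3
      have : Setoid.r a d := Setoid.trans rab rbd
      simp [h2] at r2; exact r2 this
    · have rab := r1.mp h1
      have rad := r2.mp h2
      have : Setoid.r b d := Setoid.trans (Setoid.symm rab) rad
      simp [h3] at r3; exact r3 this
  obtain ⟨x, y, hxy, hmis, hmem⟩ := key
  rcases lt_or_gt_of_ne hxy with h | h
  · exact ⟨(x, y), h, hmis, hmem⟩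
  · refine ⟨(y, x), h, ?_, ?_⟩
    · rw [hσ y x]
      constructor
      · intro hs hr; exact hmis.mp hs (Setoid.symm hr)
      · intro hr; exact hmis.mpr (fun h' => hr (Setoid.symm h'))
    · rwa [show Sym2.mk y x = Sym2.mk x y from Sym2.eq_swap]

/-- The number of pairwise edge-disjoint bad triangles is a lower bound on the
correlation clustering optimum `OPT = min_C Δ_C`. -/
theorem edge_disjoint_bad_triangles_le_OPT (n m : ℕ)
    (σ : Fin n → Fin n → Bool) (hσ : ∀ u v, σ u v = σ v u)
    (T : Fin m → Fin n × Fin n × Fin n)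
    (hbad : ∀ i, IsBadTriangle σ (T i))
    (hdisj : ∀ i j, i ≠ j → Disjoint (triPairs (T i)) (triPairs (T j))) :
    m ≤ sInf {k : ℕ | ∃ c : Setoid (Fin n), k = ccCost σ c} := by
  refine le_csInf ⟨ccCost σ ⊥, ⟨⊥, rfl⟩⟩ ?_
  rintro k ⟨c, rfl⟩
  choose g hlt hmis hmem using fun i => exists_mistake σ hσ c (T i) (hbad i)
  have hginj : Function.Injective g := by
    intro i j hij
    by_contra hne
    have := hdisj i j hne
    have : Sym2.mk (g i).1 (g i).2 ∉ triPairs (T j) :=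
      Finset.disjoint_left.mp this (hmem i)
    rw [hij] at this
    exact this (hmem j)
  set S : Set (Fin n × Fin n) :=
    {e : Fin n × Fin n | e.1 < e.2 ∧ (σ e.1 e.2 = true ↔ ¬ Setoid.r e.1 e.2)} with hS
  have hsub : Set.range g ⊆ S := by
    rintro _ ⟨i, rfl⟩; exact ⟨hlt i, hmis i⟩
  calc m = (Set.range g).ncard := by
            rw [← Set.image_univ, Set.ncard_image_of_injective _ hginj,
              Set.ncard_univ, Nat.card_eq_fintype_card, Fintype.card_fin]
       _ ≤ S.ncard := Set.ncard_le_ncard hsub (Set.toFinite S)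
       _ = ccCost σ c := rfl
end

section
/- If {β_T : T ∈ 𝒯} are nonnegative weights on the bad triangles of a labeled complete graph such that for every pair e the sum of β_T over bad triangles T containing e is at most 1, then the total weight ∑_{T ∈ 𝒯} β_T is at most OPT. -/
instance {n : ℕ} (σ : Fin n → Fin n → Bool) :
    DecidablePred (IsBadTriangle σ) := fun t => by
  unfold IsBadTriangle; infer_instance

/-- The set of bad triangles, each listed once via the canonical ordering
`t.1 < t.2.1 < t.2.2`. -/
def badTriangles (n : ℕ) (σ : Fin n → Fin n → Bool) :
    Finset (Fin n × Fin n × Fin n) :=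
  Finset.univ.filter (fun t => t.1 < t.2.1 ∧ t.2.1 < t.2.2 ∧ IsBadTriangle σ t)

lemma packing_le_cost (n : ℕ)
    (σ : Fin n → Fin n → Bool)
    (β : Fin n × Fin n × Fin n → ℝ)
    (hβ : ∀ t ∈ badTriangles n σ, 0 ≤ β t)
    (hpack : ∀ e : Fin n × Fin n, e.1 < e.2 →
      (∑ t ∈ badTriangles n σ,
        if Sym2.mk e.1 e.2 ∈ triPairs t then β t else 0) ≤ 1)
    (c : Setoid (Fin n)) :
    (∑ t ∈ badTriangles n σ, β t) ≤ (ccCost σ c : ℝ) := by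
  classical
  set M : Finset (Fin n × Fin n) :=
    Finset.univ.filter
      (fun e => e.1 < e.2 ∧ (σ e.1 e.2 = true ↔ ¬ Setoid.r e.1 e.2)) with hM
  have hcost : ccCost σ c = M.card := by
    unfold ccCost
    rw [← Set.ncard_coe_finset]
    congr 1
    ext e
    simp [hM]
  have hcover : ∀ t ∈ badTriangles n σ, ∃ e ∈ M, Sym2.mk e.1 e.2 ∈ triPairs t := by
    intro t ht
    simp only [badTriangles, Finset.mem_filter, Finset.mem_univ, true_and] at ht
    obtain ⟨a, b, d⟩ := t
    obtain ⟨h12, h23, _, _, _, hbad⟩ := ht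
    by_contra hcon
    push_neg at hcon
    have m1 : Sym2.mk a b ∈ triPairs (a, b, d) := by simp [triPairs]
    have m2 : Sym2.mk a d ∈ triPairs (a, b, d) := by simp [triPairs]
    have m3 : Sym2.mk b d ∈ triPairs (a, b, d) := by simp [triPairs]
    have e1 : ¬ ((a, b) ∈ M) := fun h => hcon _ h m1
    have e2 : ¬ ((a, d) ∈ M) := fun h => hcon _ h m2
    have e3 : ¬ ((b, d) ∈ M) := fun h => hcon _ h m3
    simp only [hM, Finset.mem_filter, Finset.mem_univ, true_and, not_and] at e1 e2 e3
    have i1 := e1 h12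
    have i2 := e2 (h12.trans h23)
    have i3 := e3 h23
    rw [not_iff] at i1 i2 i3
    replace i1 := not_iff_not.mp i1
    replace i2 := not_iff_not.mp i2
    replace i3 := not_iff_not.mp i3
    rcases hbad with ⟨hab, had, hbd⟩ | ⟨hab, had, hbd⟩ | ⟨hab, had, hbd⟩
    · have rab : Setoid.r a b := Setoid.trans (i2.mp had) (Setoid.symm (i3.mp hbd))
      have : σ a b = true := i1.mpr rab
      simp [hab] at this
    · have rad : Setoid.r a d := Setoid.trans (i1.mp hab) (i3.mp hbd)
      have : σ a d = true := i2.mpr rad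
      simp [had] at this
    · have rbd : Setoid.r b d := Setoid.trans (Setoid.symm (i1.mp hab)) (i2.mp had)
      have : σ b d = true := i3.mpr rbd
      simp [hbd] at this
  calc ∑ t ∈ badTriangles n σ, β t
      ≤ ∑ t ∈ badTriangles n σ, ∑ e ∈ M,
          (if Sym2.mk e.1 e.2 ∈ triPairs t then β t else 0) := by
        apply Finset.sum_le_sum
        intro t ht
        obtain ⟨e, heM, hemem⟩ := hcover t ht
        have h1 := Finset.single_le_sum
          (f := fun e' : Fin n × Fin n =>
            if Sym2.mk e'.1 e'.2 ∈ triPairs t then β t else 0)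
          (fun e' _ => by by_cases h : Sym2.mk e'.1 e'.2 ∈ triPairs t <;> simp [h, hβ t ht]) heM
        simpa [hemem] using h1
    _ = ∑ e ∈ M, ∑ t ∈ badTriangles n σ,
          (if Sym2.mk e.1 e.2 ∈ triPairs t then β t else 0) := Finset.sum_comm
    _ ≤ ∑ e ∈ M, 1 := by
        apply Finset.sum_le_sum
        intro e he
        simp only [hM, Finset.mem_filter] at he
        exact hpack e he.2.1
    _ = (M.card : ℝ) := by simp
    _ = (ccCost σ c : ℝ) := by rw [hcost]

/-- If nonnegative weights `β` on the bad triangles satisfy, for every pair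
`e`, that the total weight of the bad triangles containing `e` is at most `1`,
then the total weight of all bad triangles is at most `OPT`. -/
theorem fractional_packing_le_OPT (n : ℕ)
    (σ : Fin n → Fin n → Bool) (hσ : ∀ u v, σ u v = σ v u)
    (β : Fin n × Fin n × Fin n → ℝ)
    (hβ : ∀ t ∈ badTriangles n σ, 0 ≤ β t)
    (hpack : ∀ e : Fin n × Fin n, e.1 < e.2 →
      (∑ t ∈ badTriangles n σ,
        if Sym2.mk e.1 e.2 ∈ triPairs t then β t else 0) ≤ 1) :
    (∑ t ∈ badTriangles n σ, β t)
      ≤ ((sInf {k : ℕ | ∃ c : Setoid (Fin n), k = ccCost σ c} : ℕ) : ℝ) := by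
  have hne : {k : ℕ | ∃ c : Setoid (Fin n), k = ccCost σ c}.Nonempty :=
    ⟨ccCost σ ⊥, ⊥, rfl⟩
  obtain ⟨c, hc⟩ := Nat.sInf_mem hne
  rw [hc]
  exact packing_le_cost n σ β hβ hpack c
end
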